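/- arXiv:0912.3295 — 2 statements merged into one kernel-verified Lean document; each statement's English description precedes it below -/
import Mathlib

section
/- Let X and Y be real-valued random variables on a probability space. The Rényi maximal correlation R(X,Y), defined as the supremum of the Pearson correlations corr(f(X), g(Y)) over all Borel measurable functions f, g with f(X) ∈ L² and g(Y) ∈ L² and with Var f(X) > 0 and Var g(Y) > 0, equals 0 if and only if X and Y are independent. -/
open MeasureTheory ProbabilityTheory

/-- Pearson correlation of two real random variables. -/
noncomputable def pearsonCorr {Ω : Type*} [MeasureSpace Ω] (U V : Ω → ℝ) : ℝ :=
  (∫ ω, (U ω - ∫ ω', U ω') * (V ω - ∫ ω', V ω')) /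
    (Real.sqrt Var[U] * Real.sqrt Var[V])

/-- Rényi maximal correlation: supremum of Pearson correlations of `f ∘ X` and
`g ∘ Y` over Borel measurable `f, g` with `f ∘ X, g ∘ Y ∈ L²` of positive variance. -/
noncomputable def renyiCorr {Ω : Type*} [MeasureSpace Ω] (X Y : Ω → ℝ) : ℝ :=
  sSup {r : ℝ | ∃ f g : ℝ → ℝ, Measurable f ∧ Measurable g ∧
    MemLp (fun ω => f (X ω)) 2 ℙ ∧ MemLp (fun ω => g (Y ω)) 2 ℙ ∧
    0 < Var[fun ω => f (X ω)] ∧ 0 < Var[fun ω => g (Y ω)] ∧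
    r = pearsonCorr (fun ω => f (X ω)) (fun ω => g (Y ω))}

set_option linter.unusedSectionVars false
section Aux

variable {Ω : Type*} [MeasureSpace Ω] [IsProbabilityMeasure (ℙ : Measure Ω)]

/-- Cauchy-Schwarz for integrals. -/
lemma renyi_abs_integral_mul_le {U V : Ω → ℝ} (hU : MemLp U 2 ℙ) (hV : MemLp V 2 ℙ) :
    |∫ ω, U ω * V ω| ≤ Real.sqrt (∫ ω, U ω ^ 2) * Real.sqrt (∫ ω, V ω ^ 2) := by
  set u : Lp ℝ 2 (ℙ : Measure Ω) := hU.toLp U with hu_def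
  set v : Lp ℝ 2 (ℙ : Measure Ω) := hV.toLp V with hv_def
  have hu : u =ᵐ[ℙ] U := hU.coeFn_toLp
  have hv : v =ᵐ[ℙ] V := hV.coeFn_toLp
  have h1 : (inner ℝ u v : ℝ) = ∫ ω, U ω * V ω := by
    rw [MeasureTheory.L2.inner_def]
    refine integral_congr_ae ?_
    filter_upwards [hu, hv] with ω h1 h2
    simp [h1, h2, RCLike.inner_apply, mul_comm]
  have h2 : ∫ ω, U ω ^ 2 = ‖u‖ ^ 2 := by
    rw [← real_inner_self_eq_norm_sq, MeasureTheory.L2.inner_def]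
    refine (integral_congr_ae ?_).symm
    filter_upwards [hu] with ω h1
    simp [h1, RCLike.inner_apply, sq]
  have h3 : ∫ ω, V ω ^ 2 = ‖v‖ ^ 2 := by
    rw [← real_inner_self_eq_norm_sq, MeasureTheory.L2.inner_def]
    refine (integral_congr_ae ?_).symm
    filter_upwards [hv] with ω h1
    simp [h1, RCLike.inner_apply, sq]
  rw [← h1, h2, h3, Real.sqrt_sq (norm_nonneg _), Real.sqrt_sq (norm_nonneg _)]
  exact abs_real_inner_le_norm u v

/-- Variance as the integral of the squared centered variable. -/
lemma renyi_variance_eq {U : Ω → ℝ} (hU : MemLp U 2 ℙ) :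
    Var[U] = ∫ ω, (U ω - ∫ ω', U ω') ^ 2 := by
  rw [variance_eq_integral hU.aemeasurable]

lemma renyi_pearson_le_one {U V : Ω → ℝ} (hU : MemLp U 2 ℙ) (hV : MemLp V 2 ℙ) :
    pearsonCorr U V ≤ 1 := by
  have hU' : MemLp (fun ω => U ω - ∫ ω', U ω') 2 ℙ := hU.sub (memLp_const _)
  have hV' : MemLp (fun ω => V ω - ∫ ω', V ω') 2 ℙ := hV.sub (memLp_const _)
  have key := renyi_abs_integral_mul_le hU' hV'
  rw [← renyi_variance_eq hU, ← renyi_variance_eq hV] at key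
  rw [pearsonCorr]
  rcases eq_or_lt_of_le (mul_nonneg (Real.sqrt_nonneg Var[U]) (Real.sqrt_nonneg Var[V])) with h | h
  · rw [← h, div_zero]; norm_num
  · rw [div_le_one h]
    exact le_trans (le_abs_self _) key

/-- Independence kills the covariance. -/
lemma renyi_num_zero {U V : Ω → ℝ} (h : IndepFun U V ℙ) (hU : MemLp U 2 ℙ)
    (hV : MemLp V 2 ℙ) :
    ∫ ω, (U ω - ∫ ω', U ω') * (V ω - ∫ ω', V ω') = 0 := by
  set a := ∫ ω', U ω'
  set b := ∫ ω', V ω'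
  have h' : IndepFun (fun ω => U ω - a) (fun ω => V ω - b) ℙ :=
    h.comp (measurable_id.sub_const a) (measurable_id.sub_const b)
  have hU' : MemLp (fun ω => U ω - a) 2 ℙ := hU.sub (memLp_const _)
  have hV' : MemLp (fun ω => V ω - b) 2 ℙ := hV.sub (memLp_const _)
  have := h'.integral_mul_eq_mul_integral hU'.aestronglyMeasurable hV'.aestronglyMeasurable
  have hUa : ∫ ω, (U ω - a) = 0 := by
    rw [integral_sub (hU.integrable one_le_two) (integrable_const a)]
    simp [a]
  have hVb : ∫ ω, (V ω - b) = 0 := by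
    rw [integral_sub (hV.integrable one_le_two) (integrable_const b)]
    simp [b]
  calc ∫ ω, (U ω - a) * (V ω - b)
      = ∫ ω, ((fun ω => U ω - a) * fun ω => V ω - b) ω := by rfl
    _ = (∫ ω, (U ω - a)) * ∫ ω, (V ω - b) := this
    _ = 0 := by rw [hUa, hVb, mul_zero]

lemma renyi_pearson_neg (U V : Ω → ℝ) :
    pearsonCorr (fun ω => -U ω) V = - pearsonCorr U V := by
  rw [pearsonCorr, pearsonCorr]
  have hvar : Var[fun ω => -U ω] = Var[U] := by
    have : (fun ω => -U ω) = fun ω => (-1 : ℝ) * U ω := by funext ω; ring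
    rw [this, variance_const_mul]; norm_num
  have hint : ∫ ω', -U ω' = -∫ ω', U ω' := integral_neg U
  rw [hvar, hint]
  have : (fun ω => (-U ω - -∫ ω', U ω') * (V ω - ∫ ω', V ω'))
      = fun ω => -((U ω - ∫ ω', U ω') * (V ω - ∫ ω', V ω')) := by
    funext ω; ring
  rw [this, integral_neg, neg_div]

end Aux

section Aux2

variable {Ω : Type*} [MeasureSpace Ω] [IsProbabilityMeasure (ℙ : Measure Ω)]

lemma renyi_indicator_integral {A : Set Ω} (hA : MeasurableSet A) :
    ∫ ω, A.indicator (fun _ => (1:ℝ)) ω = (ℙ A).toReal := by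
  rw [integral_indicator_const _ hA]; simp [measureReal_def]

lemma renyi_indicator_memℒp {A : Set Ω} (hA : MeasurableSet A) :
    MemLp (A.indicator (fun _ => (1:ℝ))) 2 ℙ :=
  memLp_indicator_const 2 hA 1 (Or.inr (measure_ne_top _ _))

lemma renyi_indicator_variance {A : Set Ω} (hA : MeasurableSet A) :
    Var[A.indicator (fun _ => (1:ℝ))] = (ℙ A).toReal - (ℙ A).toReal ^ 2 := by
  rw [variance_eq_sub (renyi_indicator_memℒp hA)]
  have h2 : (A.indicator (fun _ => (1:ℝ))) ^ 2 = A.indicator (fun _ => (1:ℝ)) := by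
    funext ω; by_cases h : ω ∈ A <;> simp [h]
  rw [h2]
  have := renyi_indicator_integral hA
  rw [this]

lemma renyi_indicator_num {A B : Set Ω} (hA : MeasurableSet A) (hB : MeasurableSet B) :
    ∫ ω, (A.indicator (fun _ => (1:ℝ)) ω - ∫ ω', A.indicator (fun _ => (1:ℝ)) ω') *
         (B.indicator (fun _ => (1:ℝ)) ω - ∫ ω', B.indicator (fun _ => (1:ℝ)) ω') =
    (ℙ (A ∩ B)).toReal - (ℙ A).toReal * (ℙ B).toReal := by
  set p := (ℙ A).toReal with hp
  set q := (ℙ B).toReal with hq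
  rw [renyi_indicator_integral hA, renyi_indicator_integral hB]
  have hmul : ∀ ω, A.indicator (fun _ => (1:ℝ)) ω * B.indicator (fun _ => (1:ℝ)) ω
      = (A ∩ B).indicator (fun _ => (1:ℝ)) ω := by
    intro ω; by_cases h1 : ω ∈ A <;> by_cases h2 : ω ∈ B <;>
      simp [Set.indicator_apply, h1, h2]
  have key : ∀ ω, (A.indicator (fun _ => (1:ℝ)) ω - p) * (B.indicator (fun _ => (1:ℝ)) ω - q)
      = (A ∩ B).indicator (fun _ => (1:ℝ)) ω - p * B.indicator (fun _ => (1:ℝ)) ω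
        - q * A.indicator (fun _ => (1:ℝ)) ω + p * q := by
    intro ω; rw [← hmul ω]; ring
  have iA : Integrable (A.indicator (fun _ => (1:ℝ))) ℙ :=
    (renyi_indicator_memℒp hA).integrable one_le_two
  have iB : Integrable (B.indicator (fun _ => (1:ℝ))) ℙ :=
    (renyi_indicator_memℒp hB).integrable one_le_two
  have iAB : Integrable ((A ∩ B).indicator (fun _ => (1:ℝ))) ℙ :=
    (renyi_indicator_memℒp (hA.inter hB)).integrable one_le_two
  have i1 : Integrable (fun ω => (A ∩ B).indicator (fun _ => (1:ℝ)) ω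
      - p * B.indicator (fun _ => (1:ℝ)) ω) ℙ := iAB.sub (iB.const_mul p)
  have i2 : Integrable (fun ω => (A ∩ B).indicator (fun _ => (1:ℝ)) ω
      - p * B.indicator (fun _ => (1:ℝ)) ω - q * A.indicator (fun _ => (1:ℝ)) ω) ℙ :=
    i1.sub (iA.const_mul q)
  simp_rw [← hp, ← hq, key]
  rw [integral_add i2 (integrable_const _),
      integral_sub i1 (iA.const_mul q),
      integral_sub iAB (iB.const_mul p),
      integral_const_mul, integral_const_mul, integral_const,
      renyi_indicator_integral (hA.inter hB), renyi_indicator_integral hA,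
      renyi_indicator_integral hB]
  simp only [measureReal_def, measure_univ, ENNReal.toReal_one, smul_eq_mul, one_mul, ← hp, ← hq]
  ring

end Aux2

/-- The Rényi maximal correlation vanishes iff `X` and `Y` are independent. -/
theorem renyiCorr_eq_zero_iff_indepFun {Ω : Type*} [MeasureSpace Ω]
    [IsProbabilityMeasure (ℙ : Measure Ω)] (X Y : Ω → ℝ)
    (hX : Measurable X) (hY : Measurable Y) :
    renyiCorr X Y = 0 ↔ IndepFun X Y ℙ := by
  set S := {r : ℝ | ∃ f g : ℝ → ℝ, Measurable f ∧ Measurable g ∧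
    MemLp (fun ω => f (X ω)) 2 ℙ ∧ MemLp (fun ω => g (Y ω)) 2 ℙ ∧
    0 < Var[fun ω => f (X ω)] ∧ 0 < Var[fun ω => g (Y ω)] ∧
    r = pearsonCorr (fun ω => f (X ω)) (fun ω => g (Y ω))} with hS
  have hren : renyiCorr X Y = sSup S := rfl
  have hbdd : BddAbove S := by
    refine ⟨1, ?_⟩
    rintro r ⟨f, g, hf, hg, h2, h3, _, _, rfl⟩
    exact renyi_pearson_le_one h2 h3
  constructor
  · intro h0
    by_contra hInd
    rw [indepFun_iff_measure_inter_preimage_eq_mul] at hInd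
    push_neg at hInd
    obtain ⟨s, t, hs, ht, hne⟩ := hInd
    set A := X ⁻¹' s with hA_def
    set B := Y ⁻¹' t with hB_def
    have hA : MeasurableSet A := hX hs
    have hB : MeasurableSet B := hY ht
    set p := (ℙ A).toReal with hp_def
    set q := (ℙ B).toReal with hq_def
    set c := (ℙ (A ∩ B)).toReal with hc_def
    have hne' : c ≠ p * q := by
      rw [hc_def, hp_def, hq_def, ← ENNReal.toReal_mul]
      intro h
      exact hne ((ENNReal.toReal_eq_toReal_iff' (measure_ne_top _ _)
        (ENNReal.mul_ne_top (measure_ne_top _ _) (measure_ne_top _ _))).mp h)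
    -- bounds on p, q
    have hp_pos : 0 < p := by
      rcases lt_or_eq_of_le (ENNReal.toReal_nonneg (a := ℙ A)) with h | h
      · exact h
      · exfalso
        have hA0 : ℙ A = 0 := by
          rcases (ENNReal.toReal_eq_zero_iff _).mp h.symm with h' | h'
          · exact h'
          · exact absurd h' (measure_ne_top _ _)
        have : ℙ (A ∩ B) = 0 := measure_mono_null (Set.inter_subset_left) hA0
        apply hne'
        rw [hc_def, this, hp_def, hA0]
        simp
    have hq_pos : 0 < q := by
      rcases lt_or_eq_of_le (ENNReal.toReal_nonneg (a := ℙ B)) with h | h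
      · exact h
      · exfalso
        have hB0 : ℙ B = 0 := by
          rcases (ENNReal.toReal_eq_zero_iff _).mp h.symm with h' | h'
          · exact h'
          · exact absurd h' (measure_ne_top _ _)
        have : ℙ (A ∩ B) = 0 := measure_mono_null (Set.inter_subset_right) hB0
        apply hne'
        rw [hc_def, this, hq_def, hB0]
        simp
    have hp_le : p ≤ 1 := by
      rw [hp_def]
      exact ENNReal.toReal_le_of_le_ofReal zero_le_one (by simpa using prob_le_one)
    have hq_le : q ≤ 1 := by
      rw [hq_def]
      exact ENNReal.toReal_le_of_le_ofReal zero_le_one (by simpa using prob_le_one)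
    have hp_lt : p < 1 := by
      rcases lt_or_eq_of_le hp_le with h | h
      · exact h
      · exfalso
        have h1 : ℙ A = 1 := (ENNReal.toReal_eq_one_iff _).mp h
        have hA1 : ℙ Aᶜ = 0 := by
          rw [prob_compl_eq_one_sub hA, h1]
          simp
        have hBA : ℙ (B \ A) = 0 :=
          measure_mono_null (Set.diff_subset_compl B A) hA1
        have h2 : ℙ (B ∩ A) = ℙ B := by
          have := measure_inter_add_diff (μ := (ℙ : Measure Ω)) B hA
          rw [hBA, add_zero] at this
          exact this
        apply hne'
        rw [hc_def, Set.inter_comm, h2, ← hq_def, h, one_mul]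
    have hq_lt : q < 1 := by
      rcases lt_or_eq_of_le hq_le with h | h
      · exact h
      · exfalso
        have h1 : ℙ B = 1 := (ENNReal.toReal_eq_one_iff _).mp h
        have hB1 : ℙ Bᶜ = 0 := by
          rw [prob_compl_eq_one_sub hB, h1]
          simp
        have hAB : ℙ (A \ B) = 0 :=
          measure_mono_null (Set.diff_subset_compl A B) hB1
        have h2 : ℙ (A ∩ B) = ℙ A := by
          have := measure_inter_add_diff (μ := (ℙ : Measure Ω)) A hB
          rw [hAB, add_zero] at this
          exact this
        apply hne'
        rw [hc_def, h2, ← hp_def, h, mul_one]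
    -- indicator functions
    set f : ℝ → ℝ := s.indicator (fun _ => (1:ℝ)) with hf_def
    set g : ℝ → ℝ := t.indicator (fun _ => (1:ℝ)) with hg_def
    have hfX : (fun ω => f (X ω)) = A.indicator (fun _ => (1:ℝ)) := by
      funext ω
      exact (Set.indicator_comp_right X).symm
    have hgY : (fun ω => g (Y ω)) = B.indicator (fun _ => (1:ℝ)) := by
      funext ω
      exact (Set.indicator_comp_right Y).symm
    have hf_meas : Measurable f := measurable_const.indicator hs
    have hg_meas : Measurable g := measurable_const.indicator ht
    have hfX2 : MemLp (fun ω => f (X ω)) 2 ℙ := by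
      rw [hfX]; exact renyi_indicator_memℒp hA
    have hgY2 : MemLp (fun ω => g (Y ω)) 2 ℙ := by
      rw [hgY]; exact renyi_indicator_memℒp hB
    have hVarA : Var[fun ω => f (X ω)] = p - p ^ 2 := by
      rw [hfX, renyi_indicator_variance hA]
    have hVarB : Var[fun ω => g (Y ω)] = q - q ^ 2 := by
      rw [hgY, renyi_indicator_variance hB]
    have hVarA_pos : 0 < Var[fun ω => f (X ω)] := by
      rw [hVarA]; nlinarith
    have hVarB_pos : 0 < Var[fun ω => g (Y ω)] := by
      rw [hVarB]; nlinarith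
    -- the pearson correlation value
    set d := Real.sqrt (p - p ^ 2) * Real.sqrt (q - q ^ 2) with hd_def
    have hd_pos : 0 < d :=
      mul_pos (Real.sqrt_pos.mpr (by nlinarith)) (Real.sqrt_pos.mpr (by nlinarith))
    have hval : pearsonCorr (fun ω => f (X ω)) (fun ω => g (Y ω)) = (c - p * q) / d := by
      rw [pearsonCorr, hVarA, hVarB, ← hd_def]
      congr 1
      rw [hfX, hgY]
      exact renyi_indicator_num hA hB
    have hval_ne : (c - p * q) / d ≠ 0 :=
      div_ne_zero (sub_ne_zero.mpr hne') hd_pos.ne'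
    -- produce a positive element of S
    have hpos_mem : ∃ v : ℝ, 0 < v ∧ v ∈ S := by
      rcases lt_or_gt_of_ne hval_ne with hneg | hpos
      · refine ⟨-((c - p * q) / d), by linarith, ?_⟩
        refine ⟨fun x => -f x, g, hf_meas.neg, hg_meas, hfX2.neg, hgY2, ?_, hVarB_pos, ?_⟩
        · have : (fun ω => -f (X ω)) = fun ω => (-1 : ℝ) * f (X ω) := by
            funext ω; ring
          show 0 < Var[fun ω => -f (X ω)]
          rw [this, variance_const_mul]
          nlinarith
        · rw [← hval]
          exact (renyi_pearson_neg (fun ω => f (X ω)) (fun ω => g (Y ω))).symm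
      · exact ⟨(c - p * q) / d, hpos,
          ⟨f, g, hf_meas, hg_meas, hfX2, hgY2, hVarA_pos, hVarB_pos, hval.symm⟩⟩
    obtain ⟨v, hv_pos, hv_mem⟩ := hpos_mem
    have := le_csSup hbdd hv_mem
    rw [← hren, h0] at this
    linarith
  · intro h
    have hsub : S ⊆ {0} := by
      rintro r ⟨f, g, hf, hg, h2, h3, _, _, rfl⟩
      have hind : IndepFun (fun ω => f (X ω)) (fun ω => g (Y ω)) ℙ := h.comp hf hg
      simp only [Set.mem_singleton_iff]
      rw [pearsonCorr, renyi_num_zero hind h2 h3, zero_div]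
    rw [hren]
    rcases Set.subset_singleton_iff_eq.mp hsub with h | h
    · rw [h]; exact Real.sSup_empty
    · rw [h]; exact csSup_singleton 0
end

section
/- Let X and Y be real-valued random variables, let f_1, f_2, … be a sequence of functions whose linear span is dense in L²(P_X), and let g_1, g_2, … be a sequence of functions whose linear span is dense in L²(P_Y). Define the (K,L) approximate Rényi correlation ρ_{K,L} as the supremum over coefficient vectors α ∈ ℝ^K, β ∈ ℝ^L (for which the resulting variances are positive) of corr(Σ_{k=1}^K α_k f_k(X), Σ_{l=1}^L β_l g_l(Y)). Then ρ_{K,L} → R(X,Y) as K, L → ∞, where R(X,Y) is the Rényi maximal correlation; equivalently, sup_{K,L} ρ_{K,L} = R(X,Y). -/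
open MeasureTheory ProbabilityTheory

/-- The `(K, L)` approximate Rényi correlation determined by function systems
`f`, `g`: the supremum over coefficient vectors (giving positive variances) of the
Pearson correlation of `∑ αₖ fₖ(X)` and `∑ βₗ gₗ(Y)`. -/
noncomputable def approxRenyiCorr {Ω : Type*} [MeasureSpace Ω] (X Y : Ω → ℝ)
    (f g : ℕ → ℝ → ℝ) (K L : ℕ) : ℝ :=
  sSup {r : ℝ | ∃ (α : Fin K → ℝ) (β : Fin L → ℝ),
    0 < Var[fun ω => ∑ k : Fin K, α k * f k (X ω)] ∧
    0 < Var[fun ω => ∑ l : Fin L, β l * g l (Y ω)] ∧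
    r = pearsonCorr (fun ω => ∑ k : Fin K, α k * f k (X ω))
      (fun ω => ∑ l : Fin L, β l * g l (Y ω))}

/- ### Auxiliary material -/

open scoped RealInnerProductSpace ENNReal

section Helpers

set_option linter.unusedSectionVars false

variable {Ω : Type*} [MeasureSpace Ω] [IsProbabilityMeasure (ℙ : Measure Ω)]

/-- The constant function `1` as an element of `L²`. -/
noncomputable def oneL2 : Lp ℝ 2 (ℙ : Measure Ω) := (memLp_const (1:ℝ)).toLp _

/-- Centering of an `L²` random variable. -/
noncomputable def ctr (u : Lp ℝ 2 (ℙ : Measure Ω)) : Lp ℝ 2 (ℙ : Measure Ω) :=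
  u - ⟪u, oneL2⟫ • oneL2

lemma continuous_ctr : Continuous (ctr (Ω := Ω)) :=
  continuous_id.sub (by fun_prop)

lemma inner_L2 (u v : Lp ℝ 2 (ℙ : Measure Ω)) : ⟪u, v⟫ = ∫ ω, u ω * v ω := by
  rw [L2.inner_def]; simp [RCLike.inner_apply, mul_comm]

lemma inner_one {U : Ω → ℝ} (hU : MemLp U 2 ℙ) : ⟪hU.toLp U, oneL2⟫ = ∫ ω, U ω := by
  rw [inner_L2]
  refine integral_congr_ae ?_
  filter_upwards [hU.coeFn_toLp, (memLp_const (1:ℝ)).coeFn_toLp] with ω h1 h2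
  rw [h1, oneL2, h2, mul_one]

lemma ctr_coeFn {U : Ω → ℝ} (hU : MemLp U 2 ℙ) :
    (ctr (hU.toLp U) : Ω → ℝ) =ᵐ[ℙ] fun ω => U ω - ∫ ω', U ω' := by
  rw [ctr, inner_one hU]
  filter_upwards [Lp.coeFn_sub (hU.toLp U) ((∫ ω', U ω') • oneL2),
    Lp.coeFn_smul (∫ ω', U ω') (oneL2 (Ω := Ω)), hU.coeFn_toLp,
    (memLp_const (1:ℝ)).coeFn_toLp] with ω h1 h2 h3 h4
  rw [h1, Pi.sub_apply, h2, Pi.smul_apply, h3, oneL2, h4]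
  simp

lemma var_eq_norm_ctr_sq {U : Ω → ℝ} (hU : MemLp U 2 ℙ) :
    Var[U] = ‖ctr (hU.toLp U)‖ ^ 2 := by
  rw [variance_eq_integral hU.aemeasurable, ← real_inner_self_eq_norm_sq, inner_L2]
  refine integral_congr_ae ?_
  filter_upwards [ctr_coeFn hU] with ω h
  simp [h, sq]

lemma cov_eq_inner_ctr {U V : Ω → ℝ} (hU : MemLp U 2 ℙ) (hV : MemLp V 2 ℙ) :
    (∫ ω, (U ω - ∫ ω', U ω') * (V ω - ∫ ω', V ω')) = ⟪ctr (hU.toLp U), ctr (hV.toLp V)⟫ := by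
  rw [inner_L2]
  refine integral_congr_ae ?_
  filter_upwards [ctr_coeFn hU, ctr_coeFn hV] with ω h1 h2
  rw [h1, h2]

/-- Pearson correlation read off from `L²` data. -/
noncomputable def corrL2 (u v : Lp ℝ 2 (ℙ : Measure Ω)) : ℝ :=
  ⟪ctr u, ctr v⟫ / (‖ctr u‖ * ‖ctr v‖)

lemma pearson_eq_corrL2 {U V : Ω → ℝ} (hU : MemLp U 2 ℙ) (hV : MemLp V 2 ℙ) :
    pearsonCorr U V = corrL2 (hU.toLp U) (hV.toLp V) := by
  rw [pearsonCorr, corrL2, cov_eq_inner_ctr hU hV, var_eq_norm_ctr_sq hU,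
    var_eq_norm_ctr_sq hV, Real.sqrt_sq (norm_nonneg _), Real.sqrt_sq (norm_nonneg _)]

lemma abs_corrL2_le_one (u v : Lp ℝ 2 (ℙ : Measure Ω)) : |corrL2 u v| ≤ 1 := by
  rw [corrL2, abs_div, abs_of_nonneg (mul_nonneg (norm_nonneg (ctr u)) (norm_nonneg (ctr v)))]
  rcases eq_or_lt_of_le (mul_nonneg (norm_nonneg (ctr u)) (norm_nonneg (ctr v))) with h | h
  · rw [← h, div_zero]; norm_num
  · rw [div_le_one h]
    exact abs_real_inner_le_norm _ _

lemma abs_pearson_le_one {U V : Ω → ℝ} (hU : MemLp U 2 ℙ) (hV : MemLp V 2 ℙ) :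
    |pearsonCorr U V| ≤ 1 := by
  rw [pearson_eq_corrL2 hU hV]; exact abs_corrL2_le_one _ _

lemma variance_fun_neg (U : Ω → ℝ) : Var[fun ω => -U ω] = Var[U] := by
  simpa [neg_one_mul] using variance_const_mul (-1) U (ℙ : Measure Ω)

lemma pearson_neg (U V : Ω → ℝ) :
    pearsonCorr (fun ω => -U ω) V = -pearsonCorr U V := by
  rw [pearsonCorr, pearsonCorr, variance_fun_neg]
  rw [show (∫ ω', -U ω') = -∫ ω', U ω' from integral_neg U]
  rw [show (fun ω => (-U ω - -∫ ω', U ω') * (V ω - ∫ ω', V ω'))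
      = fun ω => -((U ω - ∫ ω', U ω') * (V ω - ∫ ω', V ω')) by funext ω; ring]
  rw [integral_neg, neg_div]

lemma Lp_coeFn_finsetSum {α E : Type*} [MeasurableSpace α] {μ : Measure α}
    [NormedAddCommGroup E] {p : ℝ≥0∞} {ι : Type*} (s : Finset ι) (F : ι → Lp E p μ) :
    ⇑(∑ i ∈ s, F i) =ᵐ[μ] fun x => ∑ i ∈ s, F i x := by
  classical
  induction s using Finset.induction with
  | empty => simp only [Finset.sum_empty]; exact Lp.coeFn_zero E p μ
  | insert _ _ hi ih =>
    rename_i a s'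
    rw [Finset.sum_insert hi]
    filter_upwards [Lp.coeFn_add (F a) (∑ i ∈ s', F i), ih] with x h1 h2
    rw [h1, Pi.add_apply, h2, Finset.sum_insert hi]

set_option maxHeartbeats 2000000 in
lemma exists_coeffs {X : Ω → ℝ} (hX : Measurable X) (f : ℕ → ℝ → ℝ)
    (hf2 : ∀ k, MemLp (f k) 2 (Measure.map X ℙ))
    {p : Lp ℝ 2 (Measure.map X ℙ)}
    (hp : p ∈ Submodule.span ℝ (Set.range fun k => MemLp.toLp (f k) (hf2 k))) :
    ∃ (K : ℕ) (α : Fin K → ℝ) (hmem : MemLp (fun ω => ∑ k : Fin K, α k * f k (X ω)) 2 ℙ),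
      hmem.toLp _ = Lp.compMeasurePreserving X ⟨hX, rfl⟩ p := by
  classical
  rw [Submodule.mem_span_set'] at hp
  obtain ⟨n, c, e, hsum⟩ := hp
  have hk : ∀ i, ∃ j, MemLp.toLp (f j) (hf2 j) = (e i : Lp ℝ 2 (Measure.map X ℙ)) :=
    fun i => (e i).2
  choose k hk using hk
  set K := (Finset.univ.sup k) + 1 with hK
  have hki : ∀ i, k i < K := fun i => Nat.lt_succ_of_le (Finset.le_sup (Finset.mem_univ i))
  set α : Fin K → ℝ := fun j => ∑ i : Fin n, if k i = (j : ℕ) then c i else 0 with hα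
  have key : ∀ x, (∑ j : Fin K, α j * f j x) = ∑ i : Fin n, c i * f (k i) x := by
    intro x
    simp only [hα, Finset.sum_mul]
    rw [Finset.sum_comm]
    refine Finset.sum_congr rfl fun i _ => ?_
    rw [Finset.sum_eq_single (⟨k i, hki i⟩ : Fin K)]
    · simp
    · intro j _ hj
      have hne : k i ≠ (j : ℕ) := by
        intro h; exact hj (by ext; exact h.symm)
      simp [hne]
    · intro h; exact absurd (Finset.mem_univ _) h
  have hXmp : MeasurePreserving X ℙ (Measure.map X ℙ) := ⟨hX, rfl⟩
  have hmem : MemLp (fun ω => ∑ j : Fin K, α j * f j (X ω)) 2 ℙ :=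
    memLp_finset_sum (f := fun (j : Fin K) ω => α j * f j (X ω)) Finset.univ
      (fun j _ => (((hf2 j).comp_measurePreserving hXmp)).const_mul (α j))
  refine ⟨K, α, hmem, ?_⟩
  have hp_coe : ⇑p =ᵐ[Measure.map X ℙ] fun x => ∑ i : Fin n, c i * f (k i) x := by
    rw [← hsum]
    have hae : ∀ᵐ x ∂(Measure.map X ℙ),
        ∀ i : Fin n, (c i • (e i : Lp ℝ 2 (Measure.map X ℙ))) x = c i * f (k i) x := by
      rw [ae_all_iff]
      intro i
      filter_upwards [Lp.coeFn_smul (c i) (e i : Lp ℝ 2 (Measure.map X ℙ)),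
        (hf2 (k i)).coeFn_toLp] with x h1 h2
      rw [h1, Pi.smul_apply, smul_eq_mul, ← hk i, h2]
    filter_upwards [Lp_coeFn_finsetSum Finset.univ
      (fun i : Fin n => c i • (e i : Lp ℝ 2 (Measure.map X ℙ))), hae] with x h1 h2
    rw [h1]
    exact Finset.sum_congr rfl fun i _ => h2 i
  have hcomp : ⇑(Lp.compMeasurePreserving X hXmp p) =ᵐ[ℙ]
      (fun ω => ∑ j : Fin K, α j * f j (X ω)) := by
    have h1 := Lp.coeFn_compMeasurePreserving p hXmp
    have h2 : (⇑p) ∘ X =ᵐ[ℙ] (fun x => ∑ i : Fin n, c i * f (k i) x) ∘ X :=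
      ae_eq_comp hX.aemeasurable hp_coe
    refine h1.trans (h2.trans ?_)
    refine Filter.EventuallyEq.of_eq ?_
    funext ω
    exact (key (X ω)).symm
  have heq : hmem.toLp _ = (Lp.memLp (Lp.compMeasurePreserving X hXmp p)).toLp _ := by
    rw [MemLp.toLp_eq_toLp_iff]
    exact hcomp.symm
  rw [heq, Lp.toLp_coeFn]

end Helpers
/-- If the linear spans of `(fₖ)` and `(gₗ)` are dense in `L²(P_X)` and `L²(P_Y)`
respectively, then the `(K, L)` approximate Rényi correlations converge (as a
supremum over `K, L`) to the Rényi maximal correlation. -/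
theorem iSup_approxRenyiCorr_eq_renyiCorr {Ω : Type*} [MeasureSpace Ω]
    [IsProbabilityMeasure (ℙ : Measure Ω)] (X Y : Ω → ℝ)
    (hX : Measurable X) (hY : Measurable Y)
    (f g : ℕ → ℝ → ℝ)
    (hf : ∀ k, Measurable (f k)) (hg : ∀ l, Measurable (g l))
    (hf2 : ∀ k, MemLp (f k) 2 (Measure.map X ℙ))
    (hg2 : ∀ l, MemLp (g l) 2 (Measure.map Y ℙ))
    (hfdense : Dense (↑(Submodule.span ℝ
      (Set.range fun k => MemLp.toLp (f k) (hf2 k))) :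
      Set (Lp ℝ 2 (Measure.map X ℙ))))
    (hgdense : Dense (↑(Submodule.span ℝ
      (Set.range fun l => MemLp.toLp (g l) (hg2 l))) :
      Set (Lp ℝ 2 (Measure.map Y ℙ)))) :
    ⨆ K : ℕ, ⨆ L : ℕ, approxRenyiCorr X Y f g K L = renyiCorr X Y := by
  classical
  have hXmp : MeasurePreserving X ℙ (Measure.map X ℙ) := ⟨hX, rfl⟩
  have hYmp : MeasurePreserving Y ℙ (Measure.map Y ℙ) := ⟨hY, rfl⟩
  set T : Set ℝ := {r : ℝ | ∃ f' g' : ℝ → ℝ, Measurable f' ∧ Measurable g' ∧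
    MemLp (fun ω => f' (X ω)) 2 ℙ ∧ MemLp (fun ω => g' (Y ω)) 2 ℙ ∧
    0 < Var[fun ω => f' (X ω)] ∧ 0 < Var[fun ω => g' (Y ω)] ∧
    r = pearsonCorr (fun ω => f' (X ω)) (fun ω => g' (Y ω))} with hTdef
  set S : ℕ → ℕ → Set ℝ := fun K L => {r : ℝ | ∃ (α : Fin K → ℝ) (β : Fin L → ℝ),
    0 < Var[fun ω => ∑ k : Fin K, α k * f k (X ω)] ∧
    0 < Var[fun ω => ∑ l : Fin L, β l * g l (Y ω)] ∧
    r = pearsonCorr (fun ω => ∑ k : Fin K, α k * f k (X ω))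
      (fun ω => ∑ l : Fin L, β l * g l (Y ω))} with hSdef
  have hrenyi : renyiCorr X Y = sSup T := rfl
  have happrox : ∀ K L, approxRenyiCorr X Y f g K L = sSup (S K L) := fun _ _ => rfl
  have hTle : ∀ r ∈ T, r ≤ 1 := by
    rintro r ⟨f', g', _, _, hU, hV, _, _, rfl⟩
    exact le_trans (le_abs_self _) (abs_pearson_le_one hU hV)
  have hTbdd : BddAbove T := ⟨1, hTle⟩
  have hMemX : ∀ (K : ℕ) (α : Fin K → ℝ),
      MemLp (fun ω => ∑ k : Fin K, α k * f k (X ω)) 2 ℙ :=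
    fun K α => memLp_finset_sum (f := fun (j : Fin K) ω => α j * f j (X ω)) Finset.univ
      (fun j _ => (((hf2 j).comp_measurePreserving hXmp)).const_mul (α j))
  have hMemY : ∀ (L : ℕ) (β : Fin L → ℝ),
      MemLp (fun ω => ∑ l : Fin L, β l * g l (Y ω)) 2 ℙ :=
    fun L β => memLp_finset_sum (f := fun (j : Fin L) ω => β j * g j (Y ω)) Finset.univ
      (fun j _ => (((hg2 j).comp_measurePreserving hYmp)).const_mul (β j))
  have hSsubT : ∀ K L, S K L ⊆ T := by
    rintro K L r ⟨α, β, h1, h2, rfl⟩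
    exact ⟨fun x => ∑ k : Fin K, α k * f k x, fun x => ∑ l : Fin L, β l * g l x,
      Finset.measurable_sum Finset.univ (fun k _ => ((hf k).const_mul (α k))),
      Finset.measurable_sum Finset.univ (fun l _ => ((hg l).const_mul (β l))),
      hMemX K α, hMemY L β, h1, h2, rfl⟩
  have hTneg : ∀ r ∈ T, -r ∈ T := by
    rintro r ⟨f', g', m1, m2, hU, hV, h1, h2, rfl⟩
    refine ⟨fun x => -f' x, g', m1.neg, m2, hU.neg, hV, ?_, h2, ?_⟩
    · show 0 < Var[fun ω => -f' (X ω)]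
      rw [variance_fun_neg]; exact h1
    · show _ = pearsonCorr (fun ω => -f' (X ω)) _
      rw [pearson_neg]
  have hSneg : ∀ K L, ∀ r ∈ S K L, -r ∈ S K L := by
    rintro K L r ⟨α, β, h1, h2, rfl⟩
    have hfun : (fun ω => ∑ k : Fin K, -α k * f k (X ω))
        = fun ω => -∑ k : Fin K, α k * f k (X ω) := by
      funext ω; rw [← Finset.sum_neg_distrib]
      exact Finset.sum_congr rfl fun k _ => by ring
    refine ⟨fun k => -α k, β, ?_, h2, ?_⟩
    · show 0 < Var[fun ω => ∑ k : Fin K, -α k * f k (X ω)]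
      rw [hfun, variance_fun_neg]; exact h1
    · show _ = pearsonCorr (fun ω => ∑ k : Fin K, -α k * f k (X ω)) _
      rw [hfun, pearson_neg]
  have hSle : ∀ K L, ∀ r ∈ S K L, r ≤ 1 := fun K L r hr => hTle r (hSsubT K L hr)
  have hSbdd : ∀ K L, BddAbove (S K L) := fun K L => ⟨1, hSle K L⟩
  have hS0 : ∀ K L, 0 ≤ sSup (S K L) := by
    intro K L
    rcases Set.eq_empty_or_nonempty (S K L) with h | ⟨r, hr⟩
    · rw [h, Real.sSup_empty]
    · have hh1 := le_csSup (hSbdd K L) hr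
      have hh2 := le_csSup (hSbdd K L) (hSneg K L r hr)
      linarith
  have hT0 : T.Nonempty → 0 ≤ sSup T := by
    rintro ⟨r, hr⟩
    have hh1 := le_csSup hTbdd hr
    have hh2 := le_csSup hTbdd (hTneg r hr)
    linarith
  have hupper : ∀ K L, sSup (S K L) ≤ sSup T := by
    intro K L
    rcases Set.eq_empty_or_nonempty (S K L) with h | hne
    · rw [h, Real.sSup_empty]
      rcases Set.eq_empty_or_nonempty T with h' | h'
      · rw [h', Real.sSup_empty]
      · exact hT0 h'
    · exact csSup_le hne fun r hr => le_csSup hTbdd (hSsubT K L hr)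
  have hbddL : ∀ K, BddAbove (Set.range fun L => approxRenyiCorr X Y f g K L) := by
    intro K; refine ⟨1, ?_⟩; rintro x ⟨L, rfl⟩
    show approxRenyiCorr X Y f g K L ≤ 1
    rw [happrox]; exact Real.sSup_le (hSle K L) zero_le_one
  have hbddK : BddAbove (Set.range fun K => ⨆ L, approxRenyiCorr X Y f g K L) := by
    refine ⟨1, ?_⟩; rintro x ⟨K, rfl⟩
    show (⨆ L, approxRenyiCorr X Y f g K L) ≤ 1
    exact ciSup_le fun L => by rw [happrox]; exact Real.sSup_le (hSle K L) zero_le_one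
  have hDge : ∀ K L, approxRenyiCorr X Y f g K L
      ≤ ⨆ K, ⨆ L, approxRenyiCorr X Y f g K L :=
    fun K L => le_trans (le_ciSup (hbddL K) L) (le_ciSup hbddK K)
  refine le_antisymm ?_ ?_
  · rw [hrenyi]
    exact ciSup_le fun K => ciSup_le fun L => by rw [happrox]; exact hupper K L
  · rw [hrenyi]
    set D := ⨆ K, ⨆ L, approxRenyiCorr X Y f g K L with hDdef
    rcases Set.eq_empty_or_nonempty T with h | hTne
    · rw [h, Real.sSup_empty]
      exact le_trans (by rw [happrox]; exact hS0 0 0) (hDge 0 0)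
    · refine csSup_le hTne fun r hr => ?_
      by_contra hlt
      push_neg at hlt
      obtain ⟨f₀, g₀, hm₀, hm₀', hU, hV, hvU, hvV, hreq⟩ := hr
      have hf₀2 : MemLp f₀ 2 (Measure.map X ℙ) :=
        (memLp_map_measure_iff hm₀.aestronglyMeasurable hX.aemeasurable).2 hU
      have hg₀2 : MemLp g₀ 2 (Measure.map Y ℙ) :=
        (memLp_map_measure_iff hm₀'.aestronglyMeasurable hY.aemeasurable).2 hV
      set TX : Lp ℝ 2 (Measure.map X ℙ) → Lp ℝ 2 (ℙ : Measure Ω) :=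
        fun u => Lp.compMeasurePreserving X hXmp u with hTXdef
      set TY : Lp ℝ 2 (Measure.map Y ℙ) → Lp ℝ 2 (ℙ : Measure Ω) :=
        fun u => Lp.compMeasurePreserving Y hYmp u with hTYdef
      have hTXc : Continuous TX := (Lp.isometry_compMeasurePreserving hXmp).continuous
      have hTYc : Continuous TY := (Lp.isometry_compMeasurePreserving hYmp).continuous
      have hFT : TX (hf₀2.toLp f₀) = hU.toLp _ := rfl
      have hGT : TY (hg₀2.toLp g₀) = hV.toLp _ := rfl
      have hcn1 : Continuous fun pq : Lp ℝ 2 (Measure.map X ℙ) × Lp ℝ 2 (Measure.map Y ℙ) =>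
          ‖ctr (TX pq.1)‖ := (continuous_ctr.comp (hTXc.comp continuous_fst)).norm
      have hcn2 : Continuous fun pq : Lp ℝ 2 (Measure.map X ℙ) × Lp ℝ 2 (Measure.map Y ℙ) =>
          ‖ctr (TY pq.2)‖ := (continuous_ctr.comp (hTYc.comp continuous_snd)).norm
      set O : Set (Lp ℝ 2 (Measure.map X ℙ) × Lp ℝ 2 (Measure.map Y ℙ)) :=
        {pq | 0 < ‖ctr (TX pq.1)‖ ∧ 0 < ‖ctr (TY pq.2)‖} with hOdef
      have hOopen : IsOpen O :=
        (isOpen_lt continuous_const hcn1).and (isOpen_lt continuous_const hcn2)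
      set Θ : Lp ℝ 2 (Measure.map X ℙ) × Lp ℝ 2 (Measure.map Y ℙ) → ℝ :=
        fun pq => ⟪ctr (TX pq.1), ctr (TY pq.2)⟫ /
          (‖ctr (TX pq.1)‖ * ‖ctr (TY pq.2)‖) with hΘdef
      have hΘeq : ∀ pq, Θ pq = corrL2 (TX pq.1) (TY pq.2) := fun _ => rfl
      have hΘcont : ContinuousOn Θ O := by
        apply ContinuousOn.div
        · exact ((continuous_ctr.comp (hTXc.comp continuous_fst)).inner
            (continuous_ctr.comp (hTYc.comp continuous_snd))).continuousOn
        · exact (hcn1.mul hcn2).continuousOn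
        · rintro pq hpq; exact (mul_pos hpq.1 hpq.2).ne'
      have hWopen : IsOpen (O ∩ Θ ⁻¹' Set.Ioi D) :=
        hΘcont.isOpen_inter_preimage hOopen isOpen_Ioi
      have hctrF : 0 < ‖ctr (hU.toLp _)‖ := by
        have hne : ‖ctr (hU.toLp _)‖ ≠ 0 := by
          intro h
          rw [var_eq_norm_ctr_sq hU, h] at hvU
          simp at hvU
        exact lt_of_le_of_ne (norm_nonneg _) (Ne.symm hne)
      have hctrG : 0 < ‖ctr (hV.toLp _)‖ := by
        have hne : ‖ctr (hV.toLp _)‖ ≠ 0 := by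
          intro h
          rw [var_eq_norm_ctr_sq hV, h] at hvV
          simp at hvV
        exact lt_of_le_of_ne (norm_nonneg _) (Ne.symm hne)
      have hmemW : (hf₀2.toLp f₀, hg₀2.toLp g₀) ∈ O ∩ Θ ⁻¹' Set.Ioi D := by
        refine ⟨⟨?_, ?_⟩, ?_⟩
        · rw [show TX (hf₀2.toLp f₀) = hU.toLp _ from hFT]; exact hctrF
        · rw [show TY (hg₀2.toLp g₀) = hV.toLp _ from hGT]; exact hctrG
        · show Θ _ ∈ Set.Ioi D
          rw [Set.mem_Ioi, hΘeq, hFT, hGT, ← pearson_eq_corrL2 hU hV, ← hreq]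
          exact hlt
      obtain ⟨⟨p, q⟩, hpq, hpqW⟩ :=
        (hfdense.prod hgdense).exists_mem_open hWopen ⟨_, hmemW⟩
      obtain ⟨K, α, hmemα, hα⟩ := exists_coeffs hX f hf2 hpq.1
      obtain ⟨L, β, hmemβ, hβ⟩ := exists_coeffs hY g hg2 hpq.2
      have hα' : hmemα.toLp _ = TX p := hα
      have hβ' : hmemβ.toLp _ = TY q := hβ
      have hvarα : 0 < Var[fun ω => ∑ k : Fin K, α k * f k (X ω)] := by
        rw [var_eq_norm_ctr_sq hmemα, hα']
        exact pow_pos hpqW.1.1 2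
      have hvarβ : 0 < Var[fun ω => ∑ l : Fin L, β l * g l (Y ω)] := by
        rw [var_eq_norm_ctr_sq hmemβ, hβ']
        exact pow_pos hpqW.1.2 2
      have hs : pearsonCorr (fun ω => ∑ k : Fin K, α k * f k (X ω))
          (fun ω => ∑ l : Fin L, β l * g l (Y ω)) ∈ S K L := ⟨α, β, hvarα, hvarβ, rfl⟩
      have hsD : D < pearsonCorr (fun ω => ∑ k : Fin K, α k * f k (X ω))
          (fun ω => ∑ l : Fin L, β l * g l (Y ω)) := by
        have h2 := hpqW.2
        rw [Set.mem_preimage, Set.mem_Ioi, hΘeq] at h2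
        rwa [pearson_eq_corrL2 hmemα hmemβ, hα', hβ']
      have hle : pearsonCorr (fun ω => ∑ k : Fin K, α k * f k (X ω))
          (fun ω => ∑ l : Fin L, β l * g l (Y ω)) ≤ D :=
        le_trans (le_csSup (hSbdd K L) hs) (by rw [← happrox]; exact hDge K L)
      exact absurd hsD (not_lt.mpr hle)
end
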